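/- Let Σγ be a positive semidefinite p₂×p₂ real matrix, Σε and Σε′ positive definite error covariance matrices of sizes k×k and k′×k′ respectively, and F₂ (k×p₂) and F₂′ (k′×p₂) time-plan design matrices of rank p₂. Set M₂ = F₂ᵀ (F₂ Σγ F₂ᵀ + Σε)⁻¹ F₂ and M₂′ = F₂′ᵀ (F₂′ Σγ F₂′ᵀ + Σε′)⁻¹ F₂′. Then for every vector f ∈ ℝ^{p₂}: fᵀ (F₂ᵀ Σε⁻¹ F₂)⁻¹ f ≤ fᵀ (F₂′ᵀ Σε′⁻¹ F₂′)⁻¹ f if and only if fᵀ M₂⁻¹ f ≤ fᵀ M₂′⁻¹ f. In particular, a time plan that is c-optimal for extrapolation at t₀.₅ in the marginal fixed effect model (i.e. minimizes f₂(t₀.₅)ᵀ (F₂ᵀ Σε⁻¹ F₂)⁻¹ f₂(t₀.₅)) also minimizes f₂(t₀.₅)ᵀ M₂⁻¹ f₂(t₀.₅), the design-dependent part of the asymptotic variance of the estimator of the median failure time. -/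

import Mathlib

open Matrix

lemma mulVec_inj_of_rank {k p : ℕ} (F : Matrix (Fin k) (Fin p) ℝ)
    (hF : F.rank = p) : ∀ x : Fin p → ℝ, F *ᵥ x = 0 → x = 0 := by
  have h := LinearMap.finrank_range_add_finrank_ker F.mulVecLin
  rw [show Module.finrank ℝ (Fin p → ℝ) = p by simp, ← Matrix.rank, hF] at h
  have hker : LinearMap.ker F.mulVecLin = ⊥ :=
    Submodule.finrank_eq_zero.mp (by omega)
  intro x hx
  have : x ∈ LinearMap.ker F.mulVecLin := by simpa [Matrix.mulVecLin] using hx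
  simpa [hker] using this

lemma B_posdef {k p : ℕ} (Sε : Matrix (Fin k) (Fin k) ℝ)
    (F : Matrix (Fin k) (Fin p) ℝ) (hε : Sε.PosDef) (hF : F.rank = p) :
    (Fᵀ * Sε⁻¹ * F).PosDef := by
  have hinv : Sε⁻¹.PosDef := hε.inv
  refine Matrix.PosDef.of_dotProduct_mulVec_pos ?_ (fun x hx => ?_)
  · have := isHermitian_conjTranspose_mul_mul F hinv.isHermitian
    simpa using this
  · have hFx : F *ᵥ x ≠ 0 := fun h => hx (mulVec_inj_of_rank F hF x h)
    have := hinv.dotProduct_mulVec_pos hFx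
    simpa [← mulVec_mulVec, dotProduct_mulVec, vecMul_transpose, dotProduct_mulVec,
      RCLike.re_to_real] using this

lemma key_inv {k p : ℕ} (Sγ : Matrix (Fin p) (Fin p) ℝ)
    (Sε : Matrix (Fin k) (Fin k) ℝ) (F : Matrix (Fin k) (Fin p) ℝ)
    (hγ : Sγ.PosSemidef) (hε : Sε.PosDef) (hF : F.rank = p) :
    (Fᵀ * (F * Sγ * Fᵀ + Sε)⁻¹ * F)⁻¹ = (Fᵀ * Sε⁻¹ * F)⁻¹ + Sγ := by
  set B := Fᵀ * Sε⁻¹ * F with hB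
  have hBpd : B.PosDef := B_posdef Sε F hε hF
  have hV : (F * Sγ * Fᵀ + Sε).PosDef :=
    Matrix.PosDef.posSemidef_add (by simpa using hγ.mul_mul_conjTranspose_same F) hε
  set V := F * Sγ * Fᵀ + Sε with hVdef
  have hBinv : B * B⁻¹ = 1 := mul_nonsing_inv B (isUnit_iff_ne_zero.mpr hBpd.det_pos.ne')
  have hεinv : Sε * Sε⁻¹ = 1 := mul_nonsing_inv Sε (isUnit_iff_ne_zero.mpr hε.det_pos.ne')
  have hVinv : V⁻¹ * V = 1 := nonsing_inv_mul V (isUnit_iff_ne_zero.mpr hV.det_pos.ne')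
  have step : V * Sε⁻¹ * F * B⁻¹ = F * B⁻¹ + F * Sγ := by
    have h1 : F * Sγ * Fᵀ * Sε⁻¹ * F * B⁻¹ = F * Sγ := by
      have : F * Sγ * Fᵀ * Sε⁻¹ * F * B⁻¹ = F * Sγ * (B * B⁻¹) := by
        rw [hB]; simp only [Matrix.mul_assoc]
      rw [this, hBinv, Matrix.mul_one]
    have h2 : Sε * Sε⁻¹ * F * B⁻¹ = F * B⁻¹ := by rw [hεinv, Matrix.one_mul]
    calc V * Sε⁻¹ * F * B⁻¹
        = F * Sγ * Fᵀ * Sε⁻¹ * F * B⁻¹ + Sε * Sε⁻¹ * F * B⁻¹ := by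
          rw [hVdef]; simp only [Matrix.add_mul]
      _ = F * B⁻¹ + F * Sγ := by rw [h1, h2, add_comm]
  have main : (Fᵀ * V⁻¹ * F) * (B⁻¹ + Sγ) = 1 := by
    have e1 : (Fᵀ * V⁻¹ * F) * (B⁻¹ + Sγ) = Fᵀ * V⁻¹ * (V * Sε⁻¹ * F * B⁻¹) := by
      rw [step, Matrix.mul_assoc (Fᵀ * V⁻¹) F, Matrix.mul_add]
    have e2 : Fᵀ * V⁻¹ * (V * Sε⁻¹ * F * B⁻¹) = Fᵀ * (V⁻¹ * V) * (Sε⁻¹ * (F * B⁻¹)) := by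
      simp only [Matrix.mul_assoc]
    rw [e1, e2, hVinv, Matrix.mul_one]
    have : Fᵀ * (Sε⁻¹ * (F * B⁻¹)) = B * B⁻¹ := by rw [hB]; simp only [Matrix.mul_assoc]
    rw [this, hBinv]
  exact inv_eq_right_inv main

/-- Proposition 1: comparison of two time plans.  The `c`-criterion in the
marginal fixed effect model orders time plans in exactly the same way as the
design-dependent part of the asymptotic variance in the mixed effects model,
so a time plan that is `c`-optimal for extrapolation in the fixed effect model
also minimizes the asymptotic variance of the estimated median failure time. -/
theorem c_opt_fixed_iff_mixed {k k' p₂ : ℕ}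
    (Sγ : Matrix (Fin p₂) (Fin p₂) ℝ)
    (Sε : Matrix (Fin k) (Fin k) ℝ) (Sε' : Matrix (Fin k') (Fin k') ℝ)
    (F₂ : Matrix (Fin k) (Fin p₂) ℝ) (F₂' : Matrix (Fin k') (Fin p₂) ℝ)
    (hγ : Sγ.PosSemidef) (hε : Sε.PosDef) (hε' : Sε'.PosDef)
    (hF : F₂.rank = p₂) (hF' : F₂'.rank = p₂)
    (M₂ : Matrix (Fin p₂) (Fin p₂) ℝ)
    (hM : M₂ = F₂ᵀ * (F₂ * Sγ * F₂ᵀ + Sε)⁻¹ * F₂)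
    (M₂' : Matrix (Fin p₂) (Fin p₂) ℝ)
    (hM' : M₂' = F₂'ᵀ * (F₂' * Sγ * F₂'ᵀ + Sε')⁻¹ * F₂') :
    ∀ f : Fin p₂ → ℝ,
      (f ⬝ᵥ ((F₂ᵀ * Sε⁻¹ * F₂)⁻¹ *ᵥ f) ≤ f ⬝ᵥ ((F₂'ᵀ * Sε'⁻¹ * F₂')⁻¹ *ᵥ f)
        ↔ f ⬝ᵥ (M₂⁻¹ *ᵥ f) ≤ f ⬝ᵥ (M₂'⁻¹ *ᵥ f)) := by
  intro f
  rw [hM, hM', key_inv Sγ Sε F₂ hγ hε hF, key_inv Sγ Sε' F₂' hγ hε' hF',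
    add_mulVec, dotProduct_add, add_mulVec, dotProduct_add]
  exact (add_le_add_iff_right _).symm
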